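/- For a type-α 3-spiral representative P (i.e. for all i ≥ N: (Pᵢ,Pᵢ₊₁,Pᵢ₊₂) and (Pᵢ,Pᵢ₊₁,Pᵢ₊₄) positively oriented and Pᵢ₊₃ ∈ int(Pᵢ,Pᵢ₊₁,Pᵢ₊₄)), one has Pᵢ₊₃ ∈ int(Pᵢ, Pᵢ₊₁, Pᵢ₊₂) for all i > N. -/

import Mathlib

def det2 (u v : ℝ × ℝ) : ℝ := u.1 * v.2 - u.2 * v.1

def ori (A B C : ℝ × ℝ) : ℝ := det2 (B - A) (C - B)

def inTriangle (A B C W : ℝ × ℝ) : Prop :=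
  ∃ l₁ l₂ l₃ : ℝ, l₁ ∈ Set.Ioo (0:ℝ) 1 ∧ l₂ ∈ Set.Ioo (0:ℝ) 1 ∧
    l₃ ∈ Set.Ioo (0:ℝ) 1 ∧ l₁ + l₂ + l₃ = 1 ∧ W = l₁ • A + l₂ • B + l₃ • C

lemma ori_affine_third (A B : ℝ × ℝ) (l₁ l₂ l₃ : ℝ) (E : ℝ × ℝ) (h : l₁ + l₂ + l₃ = 1) :
    ori A B (l₁ • A + l₂ • B + l₃ • E) = l₃ * ori A B E := by
  have hl : l₁ = 1 - l₂ - l₃ := by linarith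
  subst hl
  simp only [ori, det2, Prod.fst_add, Prod.snd_add, Prod.smul_fst, Prod.smul_snd,
    Prod.fst_sub, Prod.snd_sub, smul_eq_mul]
  ring

lemma ori_affine_first (A D : ℝ × ℝ) (a b c : ℝ) (Z : ℝ × ℝ) (h : a + b + c = 1) :
    ori (a • Z + b • A + c • D) A D = a * ori Z A D := by
  have ha : a = 1 - b - c := by linarith
  subst ha
  simp only [ori, det2, Prod.fst_add, Prod.snd_add, Prod.smul_fst, Prod.smul_snd,
    Prod.fst_sub, Prod.snd_sub, smul_eq_mul]
  ring

lemma mem_of_ori (A B C W : ℝ × ℝ) (hS : 0 < ori A B C) (h1 : 0 < ori B C W)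
    (h2 : 0 < ori C A W) (h3 : 0 < ori A B W) : inTriangle A B C W := by
  have hsum : ori B C W + ori C A W + ori A B W = ori A B C := by
    simp only [ori, det2, Prod.fst_sub, Prod.snd_sub]; ring
  have hSne : ori A B C ≠ 0 := ne_of_gt hS
  refine ⟨ori B C W / ori A B C, ori C A W / ori A B C, ori A B W / ori A B C,
    ⟨div_pos h1 hS, (div_lt_one hS).2 (by linarith)⟩,
    ⟨div_pos h2 hS, (div_lt_one hS).2 (by linarith)⟩,
    ⟨div_pos h3 hS, (div_lt_one hS).2 (by linarith)⟩,
    by rw [← add_div, ← add_div, hsum, div_self hSne], ?_⟩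
  have key1 : ori B C W * A.1 + ori C A W * B.1 + ori A B W * C.1 = ori A B C * W.1 := by
    simp only [ori, det2, Prod.fst_sub, Prod.snd_sub]; ring
  have key2 : ori B C W * A.2 + ori C A W * B.2 + ori A B W * C.2 = ori A B C * W.2 := by
    simp only [ori, det2, Prod.fst_sub, Prod.snd_sub]; ring
  apply Prod.ext <;>
    simp only [Prod.fst_add, Prod.snd_add, Prod.smul_fst, Prod.smul_snd, smul_eq_mul] <;>
    field_simp <;> linarith [key1, key2]

theorem stmt11 (P : ℤ → ℝ × ℝ) (N : ℤ)
    (hspiral : ∀ i ≥ N, 0 < ori (P i) (P (i+1)) (P (i+2)) ∧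
      0 < ori (P i) (P (i+1)) (P (i+4)) ∧
      inTriangle (P i) (P (i+1)) (P (i+4)) (P (i+3))) :
    ∀ i > N, inTriangle (P i) (P (i+1)) (P (i+2)) (P (i+3)) := by
  intro i hi
  obtain ⟨h0a, h0b, h0c⟩ := hspiral i (le_of_lt hi)
  obtain ⟨h1a, _, _⟩ := hspiral (i+1) (by linarith)
  obtain ⟨_, hmb, hmc⟩ := hspiral (i-1) (by linarith)
  have e1 : i - 1 + 1 = i := by ring
  have e3 : i - 1 + 3 = i + 2 := by ring
  have e4 : i - 1 + 4 = i + 3 := by ring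
  rw [e1, e4] at hmb
  rw [e1, e3, e4] at hmc
  have e5 : i + 1 + 1 = i + 2 := by ring
  have e6 : i + 1 + 2 = i + 3 := by ring
  rw [e5, e6] at h1a
  -- ori (P i) (P (i+1)) (P (i+3)) > 0 from h0c, h0b
  obtain ⟨l₁, l₂, l₃, hl₁, hl₂, hl₃, hsum, hW⟩ := h0c
  have hAB : 0 < ori (P i) (P (i+1)) (P (i+3)) := by
    rw [hW, ori_affine_third _ _ _ _ _ _ hsum]
    exact mul_pos hl₃.1 h0b
  -- ori (P (i+2)) (P i) (P (i+3)) > 0 from hmc, hmb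
  obtain ⟨a, b, c, ha, hb, hc, habc, hC⟩ := hmc
  have hCA : 0 < ori (P (i+2)) (P i) (P (i+3)) := by
    rw [hC, ori_affine_first _ _ _ _ _ _ habc]
    exact mul_pos ha.1 hmb
  exact mem_of_ori _ _ _ _ h0a h1a hCA hAB
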